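/- Let H be a real Hilbert space, u : [0,∞) → H continuously differentiable with derivative u', E : H → ℝ, e₀ ∈ ℝ, K > 0, θ ∈ (0, 1/2], and t₀ ≥ 0. Suppose that for every t ≥ 0 the function s ↦ E(u(s)) is differentiable at t with derivative −‖u'(t)‖², and that for all t ≥ t₀ one has E(u(t)) ≥ e₀ and ‖u'(t)‖ ≥ K·(E(u(t)) − e₀)^{1−θ}. Then ∫_{t₀}^∞ ‖u'(t)‖ dt ≤ (1/(θK))·(E(u(t₀)) − e₀)^θ; in particular the trajectory has finite length. -/

import Mathlib

open MeasureTheory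

/-- Finite length of a gradient-flow trajectory satisfying the energy identity
and the Łojasiewicz–Simon inequality on `[t₀, ∞)`. -/
theorem trajectory_finite_length
    {H : Type*} [NormedAddCommGroup H] [InnerProductSpace ℝ H]
    (u u' : ℝ → H) (E : H → ℝ) (e₀ K θ t₀ : ℝ)
    (hu : ∀ s ≥ (0 : ℝ), HasDerivAt u (u' s) s) (hu' : ContinuousOn u' (Set.Ici 0))
    (hK : 0 < K) (hθ : θ ∈ Set.Ioc (0 : ℝ) (1 / 2)) (ht₀ : 0 ≤ t₀)
    (hderiv : ∀ t ≥ (0 : ℝ), HasDerivAt (fun s => E (u s)) (-‖u' t‖ ^ 2) t)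
    (hE : ∀ t ≥ t₀, E (u t) ≥ e₀)
    (hLS : ∀ t ≥ t₀, ‖u' t‖ ≥ K * (E (u t) - e₀) ^ (1 - θ)) :
    IntegrableOn (fun t => ‖u' t‖) (Set.Ici t₀) ∧
      ∫ t in Set.Ici t₀, ‖u' t‖ ≤ 1 / (θ * K) * (E (u t₀) - e₀) ^ θ := by
  obtain ⟨hθ0, hθ2⟩ := hθ
  have hθK : 0 < θ * K := mul_pos hθ0 hK
  set φ : ℝ → ℝ := fun t => E (u t) - e₀ with hφdef
  set C : ℝ := 1 / (θ * K) * φ t₀ ^ θ with hCdef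
  have hφd : ∀ t ≥ (0:ℝ), HasDerivAt φ (-‖u' t‖ ^ 2) t := fun t ht =>
    (hderiv t ht).sub_const e₀
  have hφcont : ContinuousOn φ (Set.Ici 0) := fun t ht =>
    (hφd t ht).continuousAt.continuousWithinAt
  have hφ0 : ∀ t ≥ t₀, 0 ≤ φ t := fun t ht => sub_nonneg.mpr (hE t ht)
  have hcn : ContinuousOn (fun t => ‖u' t‖) (Set.Ici 0) := hu'.norm
  have hIccsub : ∀ a b : ℝ, t₀ ≤ a → Set.Icc a b ⊆ Set.Ici (0:ℝ) := by
    intro a b ha x hx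
    exact le_trans (le_trans ht₀ ha) hx.1
  -- φ is antitone on [t₀, ∞)
  have hanti : AntitoneOn φ (Set.Ici t₀) := by
    apply antitoneOn_of_deriv_nonpos (convex_Ici t₀)
      (hφcont.mono (Set.Ici_subset_Ici.mpr ht₀))
    · intro x hx
      rw [interior_Ici] at hx
      exact ((hφd x (le_trans ht₀ hx.le)).differentiableAt).differentiableWithinAt
    · intro x hx
      rw [interior_Ici] at hx
      rw [(hφd x (le_trans ht₀ hx.le)).deriv]
      exact neg_nonpos.mpr (pow_nonneg (norm_nonneg _) 2)
  -- key estimate on intervals where φ is positive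
  have key : ∀ T, t₀ ≤ T → (∀ t ∈ Set.Ico t₀ T, 0 < φ t) →
      (∫ t in t₀..T, ‖u' t‖) ≤ C - 1 / (θ * K) * φ T ^ θ := by
    intro T hT hpos
    set F : ℝ → ℝ := fun t => (∫ s in t₀..t, ‖u' s‖) + 1 / (θ * K) * φ t ^ θ with hFdef
    have hFanti : AntitoneOn F (Set.Icc t₀ T) := by
      apply antitoneOn_of_deriv_nonpos (convex_Icc t₀ T)
      · apply ContinuousOn.add
        · have := intervalIntegral.continuousOn_primitive_interval
            (f := fun t => ‖u' t‖) (μ := volume) (a := t₀) (b := T)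
            ((hcn.mono (by rw [Set.uIcc_of_le hT]; exact hIccsub t₀ T le_rfl)).integrableOn_compact
              (by rw [Set.uIcc_of_le hT]; exact isCompact_Icc))
          rwa [Set.uIcc_of_le hT] at this
        · exact continuousOn_const.mul
            (((hφcont.mono (hIccsub t₀ T le_rfl)).rpow_const fun x _ => Or.inr hθ0.le))
      · intro x hx
        rw [interior_Icc] at hx
        have hx0 : (0:ℝ) ≤ x := le_trans (le_trans ht₀ hx.1.le) le_rfl
        have hxpos : 0 < φ x := hpos x ⟨hx.1.le, hx.2⟩
        have h1 : HasDerivAt (fun t => ∫ s in t₀..t, ‖u' s‖) ‖u' x‖ x := by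
          apply intervalIntegral.integral_hasDerivAt_right
          · apply ContinuousOn.intervalIntegrable
            rw [Set.uIcc_of_le hx.1.le]
            exact hcn.mono (hIccsub t₀ x le_rfl)
          · exact ContinuousOn.stronglyMeasurableAtFilter isOpen_Ioi
              (hcn.mono (Set.Ioi_subset_Ici le_rfl)) x (lt_of_le_of_lt ht₀ hx.1)
          · exact hcn.continuousAt (Ici_mem_nhds (lt_of_le_of_lt ht₀ hx.1))
        have h2 : HasDerivAt (fun t => 1 / (θ * K) * φ t ^ θ)
            (1 / (θ * K) * (-‖u' x‖ ^ 2 * θ * φ x ^ (θ - 1))) x :=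
          (((hφd x hx0).rpow_const (Or.inl hxpos.ne'))).const_mul _
        exact ((h1.add h2)).differentiableAt.differentiableWithinAt
      · intro x hx
        rw [interior_Icc] at hx
        have hx0 : (0:ℝ) ≤ x := le_trans ht₀ hx.1.le
        have hxpos : 0 < φ x := hpos x ⟨hx.1.le, hx.2⟩
        have h1 : HasDerivAt (fun t => ∫ s in t₀..t, ‖u' s‖) ‖u' x‖ x := by
          apply intervalIntegral.integral_hasDerivAt_right
          · apply ContinuousOn.intervalIntegrable
            rw [Set.uIcc_of_le hx.1.le]
            exact hcn.mono (hIccsub t₀ x le_rfl)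
          · exact ContinuousOn.stronglyMeasurableAtFilter isOpen_Ioi
              (hcn.mono (Set.Ioi_subset_Ici le_rfl)) x (lt_of_le_of_lt ht₀ hx.1)
          · exact hcn.continuousAt (Ici_mem_nhds (lt_of_le_of_lt ht₀ hx.1))
        have h2 : HasDerivAt (fun t => 1 / (θ * K) * φ t ^ θ)
            (1 / (θ * K) * (-‖u' x‖ ^ 2 * θ * φ x ^ (θ - 1))) x :=
          (((hφd x hx0).rpow_const (Or.inl hxpos.ne'))).const_mul _
        rw [show deriv F x = _ from (h1.add h2).deriv]
        -- the inequality
        set n : ℝ := ‖u' x‖ with hn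
        set A : ℝ := φ x ^ (θ - 1) with hA
        set B : ℝ := φ x ^ (1 - θ) with hB
        have hApos : 0 < A := Real.rpow_pos_of_pos hxpos _
        have hAB : A * B = 1 := by
          rw [hA, hB, ← Real.rpow_add hxpos]
          norm_num
        have hLSx : K * B ≤ n := hLS x hx.1.le
        have hn0 : 0 ≤ n := norm_nonneg _
        have hKn : K * n ≤ A * n ^ 2 := by
          calc K * n = (A * B) * (K * n) := by rw [hAB]; ring
            _ = A * ((K * B) * n) := by ring
            _ ≤ A * (n * n) := by
                exact mul_le_mul_of_nonneg_left
                  (mul_le_mul_of_nonneg_right hLSx hn0) hApos.le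
            _ = A * n ^ 2 := by ring
        have heq : 1 / (θ * K) * (-n ^ 2 * θ * A) = -(A * n ^ 2 / K) := by
          field_simp
        rw [heq]
        have h3 : n ≤ A * n ^ 2 / K := (le_div_iff₀ hK).mpr (by linarith)
        linarith
    have := hFanti (Set.left_mem_Icc.mpr hT) (Set.right_mem_Icc.mpr hT) hT
    simp only [hFdef, intervalIntegral.integral_same, zero_add] at this
    linarith
  -- global bound on all interval integrals
  have hbound : ∀ T ≥ t₀, (∫ t in t₀..T, ‖u' t‖) ≤ C := by
    by_cases hpos : ∀ t ≥ t₀, 0 < φ t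
    · intro T hT
      have h := key T hT (fun t ht => hpos t ht.1)
      have : 0 ≤ 1 / (θ * K) * φ T ^ θ :=
        mul_nonneg (by positivity) (Real.rpow_nonneg (hφ0 T hT) θ)
      linarith
    · push_neg at hpos
      obtain ⟨t₂, ht₂, hφt₂⟩ := hpos
      set S : Set ℝ := Set.Ici t₀ ∩ φ ⁻¹' Set.Iic 0 with hSdef
      have hSclosed : IsClosed S :=
        ContinuousOn.preimage_isClosed_of_isClosed
          (hφcont.mono (Set.Ici_subset_Ici.mpr ht₀)) isClosed_Ici isClosed_Iic
      have hSne : S.Nonempty := ⟨t₂, ht₂, hφt₂⟩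
      have hSbdd : BddBelow S := ⟨t₀, fun x hx => hx.1⟩
      set t₁ : ℝ := sInf S with ht₁def
      have ht₁mem : t₁ ∈ S := hSclosed.csInf_mem hSne hSbdd
      have ht₀t₁ : t₀ ≤ t₁ := ht₁mem.1
      have ht₁0 : φ t₁ = 0 := le_antisymm ht₁mem.2 (hφ0 _ ht₀t₁)
      have hIco : ∀ t ∈ Set.Ico t₀ t₁, 0 < φ t := by
        intro t ht
        rcases (hφ0 t ht.1).lt_or_eq with h | h
        · exact h
        · exact absurd (csInf_le hSbdd ⟨ht.1, le_of_eq h.symm⟩) (not_le.mpr ht.2)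
      have hconst : ∀ t ≥ t₁, φ t = 0 := by
        intro t ht
        refine le_antisymm ?_ (hφ0 t (le_trans ht₀t₁ ht))
        rw [← ht₁0]
        exact hanti ht₀t₁ (le_trans ht₀t₁ ht) ht
      have hzero : ∀ t ≥ t₁, ‖u' t‖ = 0 := by
        intro t ht
        have h1 : HasDerivWithinAt φ (-‖u' t‖ ^ 2) (Set.Ici t₁) t :=
          (hφd t (le_trans (le_trans ht₀ ht₀t₁) ht)).hasDerivWithinAt
        have h2 : HasDerivWithinAt φ 0 (Set.Ici t₁) t :=
          (hasDerivWithinAt_const t _ (0:ℝ)).congr (fun s hs => hconst s hs) (hconst t ht)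
        have hud : UniqueDiffWithinAt ℝ (Set.Ici t₁) t := uniqueDiffOn_Ici t₁ t ht
        have := h1.derivWithin hud ▸ h2.derivWithin hud
        have hsq : ‖u' t‖ ^ 2 = 0 := by
          have h3 : -‖u' t‖ ^ 2 = 0 := by rw [← h1.derivWithin hud, h2.derivWithin hud]
          linarith
        exact pow_eq_zero_iff two_ne_zero |>.mp hsq
      intro T hT
      rcases le_total T t₁ with hTle | hTge
      · have h := key T hT (fun t ht => hIco t ⟨ht.1, lt_of_lt_of_le ht.2 hTle⟩)
        have : 0 ≤ 1 / (θ * K) * φ T ^ θ :=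
          mul_nonneg (by positivity) (Real.rpow_nonneg (hφ0 T hT) θ)
        linarith
      · have hint1 : IntervalIntegrable (fun t => ‖u' t‖) volume t₀ t₁ :=
          (hcn.mono (by rw [Set.uIcc_of_le ht₀t₁]; exact hIccsub t₀ t₁ le_rfl)).intervalIntegrable
        have hint2 : IntervalIntegrable (fun t => ‖u' t‖) volume t₁ T := by
          apply ContinuousOn.intervalIntegrable
          rw [Set.uIcc_of_le hTge]
          exact hcn.mono (hIccsub t₁ T ht₀t₁)
        rw [← intervalIntegral.integral_add_adjacent_intervals hint1 hint2]
        have hz : (∫ t in t₁..T, ‖u' t‖) = 0 := by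
          have : Set.EqOn (fun t => ‖u' t‖) (fun _ => (0:ℝ)) (Set.uIcc t₁ T) := by
            intro s hs
            rw [Set.uIcc_of_le hTge] at hs
            exact hzero s hs.1
          rw [intervalIntegral.integral_congr this, intervalIntegral.integral_const]
          simp
        rw [hz, add_zero]
        have h := key t₁ ht₀t₁ hIco
        rw [ht₁0] at h
        have hz2 : (0:ℝ) ^ θ = 0 := Real.zero_rpow hθ0.ne'
        rw [hz2] at h
        linarith
  -- conclude
  have hIocInt : ∀ T : ℝ, IntegrableOn (fun t => ‖u' t‖) (Set.Ioc t₀ T) := by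
    intro T
    exact ((hcn.mono (hIccsub t₀ T le_rfl)).integrableOn_compact isCompact_Icc).mono_set
      Set.Ioc_subset_Icc_self
  have hIoi : IntegrableOn (fun t => ‖u' t‖) (Set.Ioi t₀) := by
    apply integrableOn_Ioi_of_intervalIntegral_norm_bounded C t₀ hIocInt
      Filter.tendsto_id
    filter_upwards [Filter.eventually_ge_atTop t₀] with i hi
    have : (∫ x in t₀..i, ‖(fun t => ‖u' t‖) x‖) = ∫ x in t₀..i, ‖u' x‖ := by
      simp [norm_norm]
    rw [this]
    exact hbound i hi
  constructor
  · rw [integrableOn_Ici_iff_integrableOn_Ioi]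
    exact hIoi
  · rw [MeasureTheory.integral_Ici_eq_integral_Ioi]
    have htend := intervalIntegral_tendsto_integral_Ioi t₀ hIoi Filter.tendsto_id
    refine le_of_tendsto htend ?_
    filter_upwards [Filter.eventually_ge_atTop t₀] with i hi
    exact hbound i hi
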